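/- Let n ∈ ℕ and let q : ℕ → ℍ with constant coefficient q 0 = 0 or q 0 = 1, with derived polynomials f₁, f₂ and discriminant polynomial p̃ = f₁·f̄₁ + f₂·f̄₂. Suppose η ∈ ℂ is nonreal (Im η ≠ 0), p̃(η) = 0, and D' := |f₁(conj η)|² + |f₂(conj η)|² ≠ 0. Then the quaternion ω = (1/D')·( |f₁(conj η)|²·η + |f₂(conj η)|²·(conj η) + 2·(Im η)·( f₂(conj η)·conj(f₁(conj η)) )·k ) — where each complex number w is identified with the quaternion w.re + w.im·i and all products are taken in ℍ — is a zero of p, i.e., ∑_{m=0}^{n} (q m)·ω^m = 0. -/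

import Mathlib

noncomputable section

/-- The quaternion `a + b·i` corresponding to the complex number `z = a + b·I`. -/
def cq (z : ℂ) : Quaternion ℝ := ⟨z.re, z.im, 0, 0⟩

/-- The quaternion imaginary unit `k`. -/
def qk : Quaternion ℝ := ⟨0, 0, 0, 1⟩

/-- Evaluation of the first derived polynomial `f₁(t) = ∑ t₁⁽ᵐ⁾ tᵐ`,
where `q m = t₁⁽ᵐ⁾ + t₂⁽ᵐ⁾·j` and `t₁⁽ᵐ⁾ = (q m).re + (q m).imI·I`. -/
def f1 (n : ℕ) (q : ℕ → Quaternion ℝ) (z : ℂ) : ℂ :=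
  ∑ m ∈ Finset.range (n + 1), (⟨(q m).re, (q m).imI⟩ : ℂ) * z ^ m

/-- Evaluation of the second derived polynomial `f₂(t) = ∑ t₂⁽ᵐ⁾ tᵐ`,
where `t₂⁽ᵐ⁾ = (q m).imJ + (q m).imK·I`. -/
def f2 (n : ℕ) (q : ℕ → Quaternion ℝ) (z : ℂ) : ℂ :=
  ∑ m ∈ Finset.range (n + 1), (⟨(q m).imJ, (q m).imK⟩ : ℂ) * z ^ m

/-- Evaluation of `f̄₁`, obtained from `f₁` by conjugating each coefficient. -/
def f1b (n : ℕ) (q : ℕ → Quaternion ℝ) (z : ℂ) : ℂ :=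
  ∑ m ∈ Finset.range (n + 1), (starRingEnd ℂ) (⟨(q m).re, (q m).imI⟩ : ℂ) * z ^ m

/-- Evaluation of `f̄₂`, obtained from `f₂` by conjugating each coefficient. -/
def f2b (n : ℕ) (q : ℕ → Quaternion ℝ) (z : ℂ) : ℂ :=
  ∑ m ∈ Finset.range (n + 1), (starRingEnd ℂ) (⟨(q m).imJ, (q m).imK⟩ : ℂ) * z ^ m

/-- Evaluation of the discriminant polynomial `p̃ = f₁·f̄₁ + f₂·f̄₂`. -/
def ptilde (n : ℕ) (q : ℕ → Quaternion ℝ) (z : ℂ) : ℂ :=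
  f1 n q z * f1b n q z + f2 n q z * f2b n q z

/-- The isolated zero `ω` associated to a nonreal root `η` of the discriminant polynomial,
in the case `D = |f₁(η)|² + |f₂(η)|² ≠ 0`:
`ω = (1/D)·(|f₂(η)|²·η + |f₁(η)|²·(conj η) − 2·(Im η)·(f₂(η)·conj(f₁(η)))·k)`. -/
def omega1 (n : ℕ) (q : ℕ → Quaternion ℝ) (η : ℂ) : Quaternion ℝ :=
  (((‖f1 n q η‖ ^ 2 + ‖f2 n q η‖ ^ 2)⁻¹ : ℝ) : Quaternion ℝ) *
    (((‖f2 n q η‖ ^ 2 : ℝ) : Quaternion ℝ) * cq η +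
     ((‖f1 n q η‖ ^ 2 : ℝ) : Quaternion ℝ) * cq ((starRingEnd ℂ) η) -
     ((2 * η.im : ℝ) : Quaternion ℝ) *
       (cq (f2 n q η * (starRingEnd ℂ) (f1 n q η)) * qk))

/-- The isolated zero `ω` associated to a nonreal root `η` of the discriminant polynomial,
in the case `D' = |f₁(conj η)|² + |f₂(conj η)|² ≠ 0`:
`ω = (1/D')·(|f₁(conj η)|²·η + |f₂(conj η)|²·(conj η) + 2·(Im η)·(f₂(conj η)·conj(f₁(conj η)))·k)`. -/
def omega2 (n : ℕ) (q : ℕ → Quaternion ℝ) (η : ℂ) : Quaternion ℝ :=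
  (((‖f1 n q ((starRingEnd ℂ) η)‖ ^ 2 +
      ‖f2 n q ((starRingEnd ℂ) η)‖ ^ 2)⁻¹ : ℝ) : Quaternion ℝ) *
    (((‖f1 n q ((starRingEnd ℂ) η)‖ ^ 2 : ℝ) : Quaternion ℝ) * cq η +
     ((‖f2 n q ((starRingEnd ℂ) η)‖ ^ 2 : ℝ) : Quaternion ℝ) * cq ((starRingEnd ℂ) η) +
     ((2 * η.im : ℝ) : Quaternion ℝ) *
       (cq (f2 n q ((starRingEnd ℂ) η) * (starRingEnd ℂ) (f1 n q ((starRingEnd ℂ) η))) * qk))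

/- auxiliary -/
def qj : Quaternion ℝ := ⟨0, 0, 1, 0⟩

open scoped Quaternion

@[simp] lemma cq_re (z : ℂ) : (cq z).re = z.re := rfl
@[simp] lemma cq_imI (z : ℂ) : (cq z).imI = z.im := rfl
@[simp] lemma cq_imJ (z : ℂ) : (cq z).imJ = 0 := rfl
@[simp] lemma cq_imK (z : ℂ) : (cq z).imK = 0 := rfl
@[simp] lemma qj_re : qj.re = 0 := rfl
@[simp] lemma qj_imI : qj.imI = 0 := rfl
@[simp] lemma qj_imJ : qj.imJ = 1 := rfl
@[simp] lemma qj_imK : qj.imK = 0 := rfl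
@[simp] lemma qk_re : qk.re = 0 := rfl
@[simp] lemma qk_imI : qk.imI = 0 := rfl
@[simp] lemma qk_imJ : qk.imJ = 0 := rfl
@[simp] lemma qk_imK : qk.imK = 1 := rfl

lemma key_mul (A B η : ℂ) :
    (((‖A‖ ^ 2 : ℝ) : Quaternion ℝ) * cq η +
     ((‖B‖ ^ 2 : ℝ) : Quaternion ℝ) * cq ((starRingEnd ℂ) η) +
     ((2 * η.im : ℝ) : Quaternion ℝ) * (cq (B * (starRingEnd ℂ) A) * qk)) *
      (cq ((starRingEnd ℂ) A) + cq (-B) * qj) =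
    ((‖A‖ ^ 2 + ‖B‖ ^ 2 : ℝ) : Quaternion ℝ) *
      ((cq ((starRingEnd ℂ) A) + cq (-B) * qj) * cq η) := by
  ext <;>
    simp [Complex.sq_norm, Complex.normSq_apply, Complex.mul_re, Complex.mul_im] <;>
    ring

lemma term_mul (p : Quaternion ℝ) (a b z : ℂ) :
    p * ((cq a + cq b * qj) * cq z) =
    cq (((⟨p.re, p.imI⟩ : ℂ) * a - (⟨p.imJ, p.imK⟩ : ℂ) * (starRingEnd ℂ) b) * z) +
      cq (((⟨p.re, p.imI⟩ : ℂ) * b + (⟨p.imJ, p.imK⟩ : ℂ) * (starRingEnd ℂ) a) *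
        (starRingEnd ℂ) z) * qj := by
  ext <;> simp [Complex.mul_re, Complex.mul_im] <;> ring

lemma cq_mul (z w : ℂ) : cq (z * w) = cq z * cq w := by
  ext <;> simp [Complex.mul_re, Complex.mul_im]

lemma cq_pow (z : ℂ) (m : ℕ) : cq (z ^ m) = cq z ^ m := by
  induction m with
  | zero => ext <;> simp
  | succ m ih => rw [pow_succ, pow_succ, cq_mul, ih]

lemma cq_sum {s : Finset ℕ} (f : ℕ → ℂ) : cq (∑ i ∈ s, f i) = ∑ i ∈ s, cq (f i) := by
  induction s using Finset.cons_induction with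
  | empty => ext <;> simp
  | cons a s ha ih =>
    rw [Finset.sum_cons, Finset.sum_cons, ← ih]
    ext <;> simp

lemma f1b_eq (n : ℕ) (q : ℕ → Quaternion ℝ) (z : ℂ) :
    f1b n q z = (starRingEnd ℂ) (f1 n q ((starRingEnd ℂ) z)) := by
  simp [f1, f1b, map_sum, map_mul, map_pow]

lemma f2b_eq (n : ℕ) (q : ℕ → Quaternion ℝ) (z : ℂ) :
    f2b n q z = (starRingEnd ℂ) (f2 n q ((starRingEnd ℂ) z)) := by
  simp [f2, f2b, map_sum, map_mul, map_pow]

/-- If `η` is a nonreal root of the discriminant polynomial `p̃` and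
`D' = |f₁(conj η)|² + |f₂(conj η)|² ≠ 0`, then the quaternion
`ω = (1/D')·(|f₁(conj η)|²·η + |f₂(conj η)|²·(conj η) + 2·(Im η)·(f₂(conj η)·conj(f₁(conj η)))·k)`
is a zero of the simple quaternionic polynomial `p`. -/
theorem omega_formula_two_gives_zero
    (n : ℕ) (q : ℕ → Quaternion ℝ) (h0 : q 0 = 0 ∨ q 0 = 1) (η : ℂ)
    (hη : η.im ≠ 0) (hroot : ptilde n q η = 0)
    (hD' : ‖f1 n q ((starRingEnd ℂ) η)‖ ^ 2 +
        ‖f2 n q ((starRingEnd ℂ) η)‖ ^ 2 ≠ 0) :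
    ∑ m ∈ Finset.range (n + 1), q m * (omega2 n q η) ^ m = 0 := by
  set ηb := (starRingEnd ℂ) η with hηb
  set A := f1 n q ηb with hA
  set B := f2 n q ηb with hB
  set a := (starRingEnd ℂ) A with ha
  set b := -B with hb
  set s : Quaternion ℝ := cq a + cq b * qj with hsdef
  set D : ℝ := ‖A‖ ^ 2 + ‖B‖ ^ 2 with hD
  set ω := omega2 n q η with hω
  -- step 1: ω * s = s * cq η
  have hstep : ω * s = s * cq η := by
    rw [hω, omega2, ← hηb, ← hA, ← hB, mul_assoc, key_mul A B η, ← mul_assoc, ← hD,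
      ← Quaternion.coe_mul, inv_mul_cancel₀ hD', Quaternion.coe_one, one_mul]
  -- step 2: ω ^ m * s = s * cq (η ^ m)
  have hpow : ∀ m : ℕ, ω ^ m * s = s * cq (η ^ m) := by
    intro m
    induction m with
    | zero =>
      have h1 : cq 1 = 1 := by ext <;> simp
      rw [pow_zero, pow_zero, one_mul, h1, mul_one]
    | succ m ih =>
      rw [pow_succ, mul_assoc, hstep, ← mul_assoc, ih, mul_assoc, ← cq_mul, ← pow_succ]
  -- step 3: the sum times s is zero
  have hsum : (∑ m ∈ Finset.range (n + 1), q m * ω ^ m) * s = 0 := by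
    rw [Finset.sum_mul]
    have : ∀ m ∈ Finset.range (n + 1), q m * ω ^ m * s =
        cq (((⟨(q m).re, (q m).imI⟩ : ℂ) * a - (⟨(q m).imJ, (q m).imK⟩ : ℂ) * (starRingEnd ℂ) b) * η ^ m) +
        cq (((⟨(q m).re, (q m).imI⟩ : ℂ) * b + (⟨(q m).imJ, (q m).imK⟩ : ℂ) * (starRingEnd ℂ) a) * ηb ^ m) * qj := by
      intro m _
      rw [mul_assoc, hpow m, ← mul_assoc, mul_assoc, term_mul, map_pow]
    rw [Finset.sum_congr rfl this, Finset.sum_add_distrib, ← Finset.sum_mul, ← cq_sum, ← cq_sum]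
    have e1 : (∑ m ∈ Finset.range (n + 1),
        ((⟨(q m).re, (q m).imI⟩ : ℂ) * a - (⟨(q m).imJ, (q m).imK⟩ : ℂ) * (starRingEnd ℂ) b) * η ^ m) = 0 := by
      have : (∑ m ∈ Finset.range (n + 1),
          ((⟨(q m).re, (q m).imI⟩ : ℂ) * a - (⟨(q m).imJ, (q m).imK⟩ : ℂ) * (starRingEnd ℂ) b) * η ^ m)
          = a * f1 n q η - (starRingEnd ℂ) b * f2 n q η := by
        rw [f1, f2, Finset.mul_sum, Finset.mul_sum, ← Finset.sum_sub_distrib]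
        congr 1; funext m; ring
      rw [this, ha, hb, map_neg]
      have h1 := f1b_eq n q η
      have h2 := f2b_eq n q η
      rw [← hηb] at h1 h2
      have := hroot
      rw [ptilde, h1, h2, ← hA, ← hB] at this
      linear_combination this
    have e2 : (∑ m ∈ Finset.range (n + 1),
        ((⟨(q m).re, (q m).imI⟩ : ℂ) * b + (⟨(q m).imJ, (q m).imK⟩ : ℂ) * (starRingEnd ℂ) a) * ηb ^ m) = 0 := by
      have : (∑ m ∈ Finset.range (n + 1),
          ((⟨(q m).re, (q m).imI⟩ : ℂ) * b + (⟨(q m).imJ, (q m).imK⟩ : ℂ) * (starRingEnd ℂ) a) * ηb ^ m)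
          = b * f1 n q ηb + (starRingEnd ℂ) a * f2 n q ηb := by
        rw [f1, f2, Finset.mul_sum, Finset.mul_sum, ← Finset.sum_add_distrib]
        congr 1; funext m; ring
      rw [this, ha, hb, Complex.conj_conj, ← hA, ← hB]
      ring
    rw [e1, e2]
    have h0' : cq 0 = 0 := by ext <;> simp
    rw [h0', zero_mul, add_zero]
  -- step 4: s ≠ 0
  have hs0 : s ≠ 0 := by
    intro h
    apply hD'
    rw [hsdef, Quaternion.ext_iff] at h
    simp at h
    obtain ⟨h1, h2, h3, h4⟩ := h
    have hA0 : A = 0 := Complex.ext (by simpa [ha] using h1) (by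
      have : a.im = 0 := h2
      simpa [ha, neg_eq_zero] using this)
    have hB0 : B = 0 := Complex.ext (by simpa [hb, neg_eq_zero] using h3) (by
      simpa [hb, neg_eq_zero] using h4)
    rw [hD, hA0, hB0]
    simp
  exact (mul_eq_zero.mp hsum).resolve_right hs0
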